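/- For every τ ∈ ℍ, the limit as z → 0 (through z ∉ ℤτ + ℤ) of θ₁(τ,z)²·μ(τ,z)/η(τ)³ exists and equals 1. That is, the massless N=4 superconformal character ch_{1/4,0}(τ,z) = (θ₁(τ,z)²/η(τ)³)·μ(τ,z) has Witten index ch_{1/4,0}(τ,0) = 1. -/

import Mathlib

/-- `q = e^{2πiτ}`. -/
noncomputable def qc (τ : ℂ) : ℂ := Complex.exp (2 * Real.pi * Complex.I * τ)

/-- The Dedekind eta function `η(τ) = e^{πiτ/12} ∏_{n ≥ 1} (1 - q^n)`. -/
noncomputable def eta (τ : ℂ) : ℂ :=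
  Complex.exp (Real.pi * Complex.I * τ / 12) * ∏' n : ℕ, (1 - qc τ ^ (n + 1))

/-- `σ₁(k)`, the sum of the divisors of `k`. -/
def sigma1 (k : ℕ) : ℕ := ∑ d ∈ k.divisors, d

/-- `θ₁(τ,z) = -i q^{1/8} y^{1/2} ∏_{n≥1}(1-qⁿ)(1-yqⁿ)(1-y⁻¹q^{n-1})`. -/
noncomputable def theta1 (τ z : ℂ) : ℂ :=
  -Complex.I * Complex.exp (Real.pi * Complex.I * τ / 4) *
    Complex.exp (Real.pi * Complex.I * z) *
    ∏' n : ℕ, ((1 - qc τ ^ (n + 1)) * (1 - qc z * qc τ ^ (n + 1)) *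
      (1 - (qc z)⁻¹ * qc τ ^ n))

/-- `θ₂(τ,z) = q^{1/8} y^{1/2} ∏_{n≥1}(1-qⁿ)(1+yqⁿ)(1+y⁻¹q^{n-1})`. -/
noncomputable def theta2 (τ z : ℂ) : ℂ :=
  Complex.exp (Real.pi * Complex.I * τ / 4) * Complex.exp (Real.pi * Complex.I * z) *
    ∏' n : ℕ, ((1 - qc τ ^ (n + 1)) * (1 + qc z * qc τ ^ (n + 1)) *
      (1 + (qc z)⁻¹ * qc τ ^ n))

/-- `θ₃(τ,z) = ∏_{n≥1}(1-qⁿ)(1+yq^{n-1/2})(1+y⁻¹q^{n-1/2})`. -/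
noncomputable def theta3 (τ z : ℂ) : ℂ :=
  ∏' n : ℕ, ((1 - qc τ ^ (n + 1)) *
    (1 + qc z * Complex.exp (2 * Real.pi * Complex.I * ((n : ℂ) + 1 / 2) * τ)) *
    (1 + (qc z)⁻¹ * Complex.exp (2 * Real.pi * Complex.I * ((n : ℂ) + 1 / 2) * τ)))

/-- `θ₄(τ,z) = ∏_{n≥1}(1-qⁿ)(1-yq^{n-1/2})(1-y⁻¹q^{n-1/2})`. -/
noncomputable def theta4 (τ z : ℂ) : ℂ :=
  ∏' n : ℕ, ((1 - qc τ ^ (n + 1)) *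
    (1 - qc z * Complex.exp (2 * Real.pi * Complex.I * ((n : ℂ) + 1 / 2) * τ)) *
    (1 - (qc z)⁻¹ * Complex.exp (2 * Real.pi * Complex.I * ((n : ℂ) + 1 / 2) * τ)))

/-- The Appell–Lerch sum
`μ(τ,z) = (-i y^{1/2}/θ₁(τ,z)) ∑_{ℓ∈ℤ} (-1)^ℓ y^ℓ q^{ℓ(ℓ+1)/2}/(1-yq^ℓ)`. -/
noncomputable def appellMu (τ z : ℂ) : ℂ :=
  -Complex.I * Complex.exp (Real.pi * Complex.I * z) / theta1 τ z *
    ∑' l : ℤ, (-1 : ℂ) ^ l * qc z ^ l * qc τ ^ (l * (l + 1) / 2) /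
      (1 - qc z * qc τ ^ l)

lemma norm_log_le_two {w : ℂ} (h : ‖w - 1‖ ≤ 1/2) : ‖Complex.log w‖ ≤ 2 * ‖w - 1‖ := by
  have := Complex.norm_log_one_add_half_le_self (z := w - 1) h
  rw [add_sub_cancel] at this
  nlinarith [norm_nonneg (w - 1)]

lemma mem_slit_of_close {w : ℂ} (h : ‖w - 1‖ ≤ 1/2) : w ∈ Complex.slitPlane := by
  rw [Complex.mem_slitPlane_iff]
  left
  have h2 : |(w - 1).re| ≤ ‖w - 1‖ := Complex.abs_re_le_norm _
  have : w.re = 1 + (w - 1).re := by simp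
  rw [this]
  have := abs_le.1 h2
  linarith

lemma exists_small_pow {M r : ℝ} (hM : 0 ≤ M) (hr0 : 0 ≤ r) (hr1 : r < 1) :
    ∃ N : ℕ, M * r ^ N ≤ 1/2 := by
  have h := (tendsto_pow_atTop_nhds_zero_of_lt_one hr0 hr1).const_mul M
  rw [mul_zero] at h
  have := h.eventually (eventually_le_nhds (by norm_num : (0:ℝ) < 1/2))
  exact this.exists

lemma mult_of_bound {g : ℕ → ℂ} {M r : ℝ} (hr0 : 0 ≤ r) (hr1 : r < 1)
    (hg0 : ∀ n, g n ≠ 0) (hgb : ∀ n, ‖g n - 1‖ ≤ M * r ^ n) :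
    Multipliable g ∧ (∏' n, g n) ≠ 0 := by
  have hM : 0 ≤ M := by have := (norm_nonneg (g 0 - 1)).trans (hgb 0); simpa using this
  obtain ⟨N, hN⟩ := exists_small_pow hM hr0 hr1
  have hb2 : ∀ n, ‖g (n + N) - 1‖ ≤ (M * r ^ N) * r ^ n := by
    intro n
    calc ‖g (n + N) - 1‖ ≤ M * r ^ (n + N) := hgb _
    _ = (M * r ^ N) * r ^ n := by rw [pow_add]; ring
  have hb3 : ∀ n, ‖g (n + N) - 1‖ ≤ 1/2 := by
    intro n
    refine (hb2 n).trans ?_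
    calc (M * r ^ N) * r ^ n ≤ (1/2) * 1 := by
          apply mul_le_mul hN (pow_le_one₀ hr0 hr1.le) (pow_nonneg hr0 _)
            (by positivity)
    _ = 1/2 := by ring
  have hlogsum : Summable fun n => Complex.log (g n) := by
    rw [← summable_nat_add_iff N]
    apply Summable.of_norm_bounded (g := fun n => 2 * ((M * r ^ N) * r ^ n))
    · exact ((summable_geometric_of_lt_one hr0 hr1).mul_left _).mul_left _
    · intro n
      exact (norm_log_le_two (hb3 n)).trans (by nlinarith [hb2 n, norm_nonneg (g (n+N) - 1)])
  have heq := Complex.cexp_tsum_eq_tprod (f := g) hg0 hlogsum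
  constructor
  · exact Complex.multipliable_of_summable_log hlogsum
  · rw [← heq]
    exact Complex.exp_ne_zero _

lemma continuousOn_tprod' {g : ℕ → ℂ → ℂ} {s : Set ℂ} {M r : ℝ}
    (hM : 0 ≤ M) (hr0 : 0 ≤ r) (hr1 : r < 1)
    (hc : ∀ n, ContinuousOn (g n) s)
    (hg0 : ∀ n, ∀ z ∈ s, g n z ≠ 0)
    (hgb : ∀ n, ∀ z ∈ s, ‖g n z - 1‖ ≤ M * r ^ n) :
    ContinuousOn (fun z => ∏' n, g n z) s := by
  obtain ⟨N, hN⟩ := exists_small_pow hM hr0 hr1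
  have hb2 : ∀ n (x : ↥s), ‖g (n + N) x - 1‖ ≤ (M * r ^ N) * r ^ n := by
    intro n x
    calc ‖g (n + N) (x:ℂ) - 1‖ ≤ M * r ^ (n + N) := hgb _ _ x.2
    _ = (M * r ^ N) * r ^ n := by rw [pow_add]; ring
  have hb3 : ∀ n (x : ↥s), ‖g (n + N) x - 1‖ ≤ 1/2 := by
    intro n x
    refine (hb2 n x).trans ?_
    calc (M * r ^ N) * r ^ n ≤ (1/2) * 1 := by
          apply mul_le_mul hN (pow_le_one₀ hr0 hr1.le) (pow_nonneg hr0 _) (by positivity)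
    _ = 1/2 := by ring
  have htail_ne : ∀ (x : ↥s) n, g (n + N) x ≠ 0 := fun x n => hg0 _ _ x.2
  have hlogsum : ∀ x : ↥s, Summable fun n => Complex.log (g (n + N) x) := by
    intro x
    apply Summable.of_norm_bounded (g := fun n => 2 * ((M * r ^ N) * r ^ n))
    · exact ((summable_geometric_of_lt_one hr0 hr1).mul_left _).mul_left _
    · intro n
      exact (norm_log_le_two (hb3 n x)).trans
        (by nlinarith [hb2 n x, norm_nonneg (g (n+N) (x:ℂ) - 1)])
  have heq : (fun x : ↥s => Complex.exp (∑' n, Complex.log (g (n + N) x))) =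
      fun x : ↥s => ∏' n, g (n + N) x :=
    funext fun x => Complex.cexp_tsum_eq_tprod (htail_ne x) (hlogsum x)
  have hcont_sum : Continuous fun x : ↥s => ∑' n, Complex.log (g (n + N) x) := by
    apply continuous_tsum (u := fun n => 2 * ((M * r ^ N) * r ^ n))
    · intro n
      exact Continuous.clog ((hc (n + N)).restrict) (fun x => mem_slit_of_close (hb3 n x))
    · exact ((summable_geometric_of_lt_one hr0 hr1).mul_left _).mul_left _
    · intro n x
      exact (norm_log_le_two (hb3 n x)).trans
        (by nlinarith [hb2 n x, norm_nonneg (g (n+N) (x:ℂ) - 1)])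
  have htailcont : Continuous fun x : ↥s => ∏' n, g (n + N) x := by
    rw [← heq]
    exact Complex.continuous_exp.comp hcont_sum
  have hheadcont : Continuous fun x : ↥s => ∏ i ∈ Finset.range N, g i x :=
    continuous_finset_prod _ (fun i _ => (hc i).restrict)
  rw [continuousOn_iff_continuous_restrict]
  have : s.restrict (fun z => ∏' n, g n z) =
      fun x : ↥s => (∏ i ∈ Finset.range N, g i x) * ∏' n, g (n + N) x := by
    funext x
    have keytail : Multipliable (fun n => g (n + N) (x:ℂ)) := by
      refine (mult_of_bound (M := M * r ^ N) hr0 hr1 (fun n => hg0 _ _ x.2) (fun n => ?_)).1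
      exact hb2 n x
    exact (keytail.prod_mul_tprod_nat_mul').symm
  rw [show s.domRestrict (fun z => ∏' n, g n z) = s.restrict (fun z => ∏' n, g n z) from rfl, this]
  exact hheadcont.mul htailcont
section AuxLemmas
open Complex Filter Finset

lemma qc_ne_zero (w : ℂ) : qc w ≠ 0 := Complex.exp_ne_zero _

lemma qc_zero : qc 0 = 1 := by simp [qc]

lemma qc_inv (w : ℂ) : (qc w)⁻¹ = qc (-w) := by
  rw [qc, qc, ← Complex.exp_neg]; ring_nf

lemma qc_add (a b : ℂ) : qc (a + b) = qc a * qc b := by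
  rw [qc, qc, qc, ← Complex.exp_add]; ring_nf

lemma qc_zpow (w : ℂ) (k : ℤ) : qc w ^ k = qc (k * w) := by
  rw [qc, qc, ← Complex.exp_int_mul]; ring_nf

lemma two_pi_I_ne_zero' : (2 * (Real.pi : ℂ) * Complex.I) ≠ 0 := by
  simp [Real.pi_ne_zero, Complex.I_ne_zero]

lemma qc_norm (w : ℂ) : ‖qc w‖ = Real.exp (-(2 * Real.pi * w.im)) := by
  rw [qc, Complex.norm_exp]
  congr 1
  simp [Complex.mul_im, Complex.mul_re]

/-- Key lattice nonvanishing lemma. -/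
lemma qc_mul_zpow_ne_one {τ : ℂ} {z : ℂ} (hz : ∀ m n : ℤ, z ≠ m * τ + n) (k : ℤ) :
    qc z * qc τ ^ k ≠ 1 := by
  intro h
  rw [qc_zpow, ← qc_add] at h
  rw [qc, Complex.exp_eq_one_iff] at h
  obtain ⟨n, hn⟩ := h
  apply hz (-k) n
  have h3 : (2 * (Real.pi : ℂ) * Complex.I) * (z - ((-k : ℤ) * τ + n)) = 0 := by
    push_cast
    push_cast at hn
    ring_nf
    ring_nf at hn
    linear_combination hn
  rcases mul_eq_zero.1 h3 with h4 | h4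
  · exact absurd h4 two_pi_I_ne_zero'
  · exact sub_eq_zero.1 h4

lemma one_sub_qc_mul_ne {τ : ℂ} {z : ℂ} (hz : ∀ m n : ℤ, z ≠ m * τ + n) (k : ℤ) :
    1 - qc z * qc τ ^ k ≠ 0 := by
  intro h
  exact qc_mul_zpow_ne_one hz k (by linear_combination -h)

lemma neg_lattice {τ : ℂ} {z : ℂ} (hz : ∀ m n : ℤ, z ≠ m * τ + n) :
    ∀ m n : ℤ, -z ≠ m * τ + n := by
  intro m n h
  apply hz (-m) (-n)
  push_cast
  linear_combination -h

/-! ### Product pieces -/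

noncomputable def Pz (τ : ℂ) : ℂ := ∏' n : ℕ, (1 - qc τ ^ (n + 1))
noncomputable def PB (τ z : ℂ) : ℂ := ∏' n : ℕ, (1 - qc z * qc τ ^ (n + 1))
noncomputable def PC (τ z : ℂ) : ℂ := ∏' n : ℕ, (1 - (qc z)⁻¹ * qc τ ^ (n + 1))

lemma one_sub_pow_ne {τ : ℂ} (hq1 : ‖qc τ‖ < 1) (n : ℕ) : 1 - qc τ ^ (n + 1) ≠ 0 := by
  intro h
  rw [sub_eq_zero] at h
  have h2 := congrArg norm h
  rw [norm_one, norm_pow] at h2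
  have : ‖qc τ‖ ^ (n + 1) < 1 := pow_lt_one₀ (norm_nonneg _) hq1 (Nat.succ_ne_zero n)
  rw [← h2] at this
  exact absurd this (lt_irrefl _)

lemma pow_bound_aux {r : ℝ} (c : ℝ) (hc : 0 ≤ c) (hc2 : c ≤ 3/2) (hr0 : 0 ≤ r) (hr1 : r < 1)
    (n : ℕ) : c * r ^ (n + 1) ≤ 2 * r ^ n := by
  rw [pow_succ]
  have h1 : 0 ≤ r ^ n := pow_nonneg hr0 n
  nlinarith [mul_nonneg hc hr0, mul_le_mul hc2 hr1.le hr0 (by norm_num : (0:ℝ) ≤ 3/2)]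

lemma Pz_props {τ : ℂ} (hq1 : ‖qc τ‖ < 1) :
    Multipliable (fun n : ℕ => 1 - qc τ ^ (n + 1)) ∧ Pz τ ≠ 0 := by
  refine mult_of_bound (M := 2) (norm_nonneg _) hq1 (one_sub_pow_ne hq1) ?_
  intro n
  have : ‖1 - qc τ ^ (n + 1) - 1‖ = ‖qc τ‖ ^ (n + 1) := by
    rw [sub_sub_cancel_left, norm_neg, norm_pow]
  rw [this]
  have := pow_bound_aux 1 zero_le_one (by norm_num) (norm_nonneg (qc τ)) hq1 n
  linarith

lemma PB_props {τ z : ℂ} (hq1 : ‖qc τ‖ < 1) (hy : ‖qc z‖ ≤ 3/2)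
    (h0 : ∀ n : ℕ, 1 - qc z * qc τ ^ (n + 1) ≠ 0) :
    Multipliable (fun n : ℕ => 1 - qc z * qc τ ^ (n + 1)) ∧ PB τ z ≠ 0 := by
  refine mult_of_bound (M := 2) (norm_nonneg _) hq1 h0 ?_
  intro n
  have : ‖1 - qc z * qc τ ^ (n + 1) - 1‖ = ‖qc z‖ * ‖qc τ‖ ^ (n + 1) := by
    rw [sub_sub_cancel_left, norm_neg, norm_mul, norm_pow]
  rw [this]
  exact pow_bound_aux _ (norm_nonneg _) hy (norm_nonneg (qc τ)) hq1 n

lemma PC_props {τ z : ℂ} (hq1 : ‖qc τ‖ < 1) (hy : ‖(qc z)⁻¹‖ ≤ 3/2)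
    (h0 : ∀ n : ℕ, 1 - (qc z)⁻¹ * qc τ ^ (n + 1) ≠ 0) :
    Multipliable (fun n : ℕ => 1 - (qc z)⁻¹ * qc τ ^ (n + 1)) ∧ PC τ z ≠ 0 := by
  refine mult_of_bound (M := 2) (norm_nonneg _) hq1 h0 ?_
  intro n
  have : ‖1 - (qc z)⁻¹ * qc τ ^ (n + 1) - 1‖ = ‖(qc z)⁻¹‖ * ‖qc τ‖ ^ (n + 1) := by
    rw [sub_sub_cancel_left, norm_neg, norm_mul, norm_pow]
  rw [this]
  exact pow_bound_aux _ (norm_nonneg _) hy (norm_nonneg (qc τ)) hq1 n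

lemma Cfull_mult {τ z : ℂ} (hq1 : ‖qc τ‖ < 1) (hy : ‖(qc z)⁻¹‖ ≤ 3/2)
    (h0 : ∀ n : ℕ, 1 - (qc z)⁻¹ * qc τ ^ n ≠ 0) :
    Multipliable (fun n : ℕ => 1 - (qc z)⁻¹ * qc τ ^ n) := by
  refine (mult_of_bound (M := 2) (norm_nonneg _) hq1 h0 ?_).1
  intro n
  have : ‖1 - (qc z)⁻¹ * qc τ ^ n - 1‖ = ‖(qc z)⁻¹‖ * ‖qc τ‖ ^ n := by
    rw [sub_sub_cancel_left, norm_neg, norm_mul, norm_pow]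
  rw [this]
  have h1 : 0 ≤ ‖qc τ‖ ^ n := pow_nonneg (norm_nonneg _) n
  nlinarith [norm_nonneg ((qc z)⁻¹)]

lemma T_split {τ z : ℂ} (hq1 : ‖qc τ‖ < 1) (hy : ‖qc z‖ ≤ 3/2) (hyi : ‖(qc z)⁻¹‖ ≤ 3/2)
    (h0B : ∀ n : ℕ, 1 - qc z * qc τ ^ (n + 1) ≠ 0)
    (h0C : ∀ n : ℕ, 1 - (qc z)⁻¹ * qc τ ^ n ≠ 0) :
    (∏' n : ℕ, ((1 - qc τ ^ (n + 1)) * (1 - qc z * qc τ ^ (n + 1)) *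
      (1 - (qc z)⁻¹ * qc τ ^ n)))
      = Pz τ * PB τ z * ((1 - (qc z)⁻¹) * PC τ z) := by
  have hA := (Pz_props hq1).1
  have hB := (PB_props hq1 hy h0B).1
  have hC0 : ∀ n : ℕ, 1 - (qc z)⁻¹ * qc τ ^ (n + 1) ≠ 0 := fun n => h0C (n + 1)
  have hC := (PC_props hq1 hyi hC0).1
  have hCfull := Cfull_mult hq1 hyi h0C
  rw [Multipliable.tprod_mul (hA.mul hB) hCfull, Multipliable.tprod_mul hA hB]
  have : (∏' n : ℕ, (1 - (qc z)⁻¹ * qc τ ^ n)) = (1 - (qc z)⁻¹ * qc τ ^ 0) *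
      ∏' n : ℕ, (1 - (qc z)⁻¹ * qc τ ^ (n + 1)) := tprod_eq_zero_mul' hC
  rw [this, pow_zero, mul_one]
  rfl

lemma theta1_eq {τ z : ℂ} (hq1 : ‖qc τ‖ < 1) (hy : ‖qc z‖ ≤ 3/2) (hyi : ‖(qc z)⁻¹‖ ≤ 3/2)
    (h0B : ∀ n : ℕ, 1 - qc z * qc τ ^ (n + 1) ≠ 0)
    (h0C : ∀ n : ℕ, 1 - (qc z)⁻¹ * qc τ ^ n ≠ 0) :
    theta1 τ z = -Complex.I * Complex.exp (Real.pi * Complex.I * τ / 4) *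
      Complex.exp (Real.pi * Complex.I * z) *
      (Pz τ * PB τ z * ((1 - (qc z)⁻¹) * PC τ z)) := by
  rw [theta1, T_split hq1 hy hyi h0B h0C]


/-! ### Sum pieces -/

noncomputable def DD (τ : ℂ) (ε : ℝ) : ℝ :=
  min (1 - (1 + ε) * ‖qc τ‖) ((1 - ε) / ‖qc τ‖ - 1)

noncomputable def vv (τ : ℂ) (ε : ℝ) (l : ℤ) : ℝ :=
  (3/2) ^ l.natAbs * ‖qc τ‖ ^ (l.natAbs * (l.natAbs - 1) / 2) / DD τ ε

noncomputable def RR (τ z : ℂ) : ℂ :=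
  ∑' l : ℤ, if l = 0 then 0 else
    (-1 : ℂ) ^ l * qc z ^ l * qc τ ^ (l * (l + 1) / 2) / (1 - qc z * qc τ ^ l)

lemma DD_pos {τ : ℂ} {ε : ℝ} (hr0 : 0 < ‖qc τ‖) (hq1 : ‖qc τ‖ < 1)
    (hε0 : 0 < ε) (hεr : ε ≤ (1 - ‖qc τ‖) / 2) : 0 < DD τ ε := by
  apply lt_min
  · nlinarith
  · rw [sub_pos, lt_div_iff₀ hr0]
    nlinarith

lemma vv_nonneg {τ : ℂ} {ε : ℝ} (hr0 : 0 < ‖qc τ‖) (hq1 : ‖qc τ‖ < 1)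
    (hε0 : 0 < ε) (hεr : ε ≤ (1 - ‖qc τ‖) / 2) (l : ℤ) : 0 ≤ vv τ ε l := by
  have hD := DD_pos hr0 hq1 hε0 hεr
  unfold vv
  positivity

lemma tri_succ (k : ℕ) : (k + 1) * k / 2 = k * (k - 1) / 2 + k := by
  obtain ⟨x, hx⟩ : 2 ∣ (k + 1) * k := by
    have := Nat.even_mul_succ_self k
    rw [mul_comm] at this
    exact this.two_dvd
  obtain ⟨y, hy⟩ : 2 ∣ k * (k - 1) := (Nat.even_mul_pred_self k).two_dvd
  have e3 : (k + 1) * k = k * (k - 1) + 2 * k := by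
    rcases k with _ | j
    · simp
    · simp only [Nat.succ_sub_one]
      ring
  rw [hx, hy] at e3 ⊢
  omega

lemma int_exp_ineq (l : ℤ) : (↑(l.natAbs * (l.natAbs - 1) / 2) : ℤ) ≤ l * (l + 1) / 2 := by
  obtain ⟨a, ha⟩ := Int.even_mul_succ_self l
  obtain ⟨y, hy⟩ : 2 ∣ l.natAbs * (l.natAbs - 1) := (Nat.even_mul_pred_self l.natAbs).two_dvd
  have key : (↑(l.natAbs * (l.natAbs - 1)) : ℤ) ≤ l * (l + 1) := by
    rcases Nat.eq_zero_or_pos l.natAbs with h0 | h0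
    · have : l = 0 := Int.natAbs_eq_zero.1 h0
      simp [this, h0]
    · push_cast [Nat.cast_sub h0]
      rcases abs_cases l with ⟨h1, h2⟩ | ⟨h1, h2⟩ <;> nlinarith [h1, h2]
  rw [hy] at key ⊢
  rw [ha] at key ⊢
  push_cast at key ⊢
  omega

lemma term_bound {τ z : ℂ} {ε : ℝ} (hr0 : 0 < ‖qc τ‖) (hq1 : ‖qc τ‖ < 1)
    (hε0 : 0 < ε) (hε2 : ε ≤ 1/2) (hεr : ε ≤ (1 - ‖qc τ‖) / 2)
    (hy : ‖qc z - 1‖ ≤ ε) (hyi : ‖(qc z)⁻¹ - 1‖ ≤ ε)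
    {l : ℤ} (hl : l ≠ 0) :
    ‖(-1 : ℂ) ^ l * qc z ^ l * qc τ ^ (l * (l + 1) / 2) / (1 - qc z * qc τ ^ l)‖ ≤ vv τ ε l := by
  have hD := DD_pos hr0 hq1 hε0 hεr
  have hyub : ‖qc z‖ ≤ 1 + ε := by
    have := norm_sub_norm_le (qc z) 1
    rw [norm_one] at this; linarith
  have hylb : 1 - ε ≤ ‖qc z‖ := by
    have := norm_sub_norm_le (1 : ℂ) (qc z)
    rw [norm_one, norm_sub_rev] at this; linarith
  have hyiub : ‖(qc z)⁻¹‖ ≤ 1 + ε := by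
    have := norm_sub_norm_le ((qc z)⁻¹) 1
    rw [norm_one] at this; linarith
  have hy32 : ‖qc z‖ ≤ 3/2 := by linarith
  have hyi32 : ‖(qc z)⁻¹‖ ≤ 3/2 := by linarith
  -- numerator bounds
  have hn1 : ‖(-1 : ℂ) ^ l‖ = 1 := by
    rw [norm_zpow, norm_neg, norm_one, one_zpow]
  have hn2 : ‖qc z ^ l‖ ≤ (3/2 : ℝ) ^ l.natAbs := by
    rcases le_or_gt 0 l with h | h
    · lift l to ℕ using h
      rw [zpow_natCast, norm_pow, Int.natAbs_natCast]
      exact pow_le_pow_left₀ (norm_nonneg _) hy32 _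
    · have hk : l = -(l.natAbs : ℤ) := by
        rcases Int.natAbs_eq l with h' | h'
        · omega
        · exact h'
      have key : ∀ k : ℕ, ‖qc z ^ (-(k:ℤ))‖ ≤ (3/2 : ℝ) ^ k := by
        intro k
        rw [zpow_neg, zpow_natCast, norm_inv, norm_pow, ← inv_pow, ← norm_inv]
        exact pow_le_pow_left₀ (norm_nonneg _) hyi32 _
      calc ‖qc z ^ l‖ = ‖qc z ^ (-(l.natAbs:ℤ))‖ := by rw [← hk]
        _ ≤ (3/2 : ℝ) ^ l.natAbs := key _
  have hn3 : ‖qc τ ^ (l * (l + 1) / 2)‖ ≤ ‖qc τ‖ ^ (l.natAbs * (l.natAbs - 1) / 2) := by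
    rw [norm_zpow]
    calc ‖qc τ‖ ^ (l * (l + 1) / 2)
        ≤ ‖qc τ‖ ^ ((l.natAbs * (l.natAbs - 1) / 2 : ℕ) : ℤ) :=
          zpow_le_zpow_right_of_le_one₀ hr0 hq1.le (int_exp_ineq l)
      _ = ‖qc τ‖ ^ (l.natAbs * (l.natAbs - 1) / 2 : ℕ) := zpow_natCast _ _
  -- denominator bound
  have hd : DD τ ε ≤ ‖1 - qc z * qc τ ^ l‖ := by
    rcases lt_or_gt_of_ne hl with h | h
    · -- l ≤ -1
      have hq1l : ‖qc τ‖ ^ (-1 : ℤ) ≤ ‖qc τ‖ ^ l :=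
        zpow_le_zpow_right_of_le_one₀ hr0 hq1.le (by omega)
      rw [zpow_neg_one] at hq1l
      have h1 : (1 - ε) * ‖qc τ‖⁻¹ ≤ ‖qc z * qc τ ^ l‖ := by
        rw [norm_mul, norm_zpow]
        apply mul_le_mul hylb hq1l (by positivity) (norm_nonneg _)
      have h2 := norm_sub_norm_le (qc z * qc τ ^ l) (1 : ℂ)
      rw [norm_one, norm_sub_rev] at h2
      calc DD τ ε ≤ (1 - ε) / ‖qc τ‖ - 1 := min_le_right _ _
        _ ≤ ‖qc z * qc τ ^ l‖ - 1 := by rw [div_eq_mul_inv]; linarith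
        _ ≤ ‖1 - qc z * qc τ ^ l‖ := by linarith
    · -- l ≥ 1
      have hq1l : ‖qc τ‖ ^ l ≤ ‖qc τ‖ ^ (1 : ℤ) :=
        zpow_le_zpow_right_of_le_one₀ hr0 hq1.le (by omega)
      rw [zpow_one] at hq1l
      have h1 : ‖qc z * qc τ ^ l‖ ≤ (1 + ε) * ‖qc τ‖ := by
        rw [norm_mul, norm_zpow]
        apply mul_le_mul hyub hq1l (by positivity) (by linarith)
      have h2 := norm_sub_norm_le (1 : ℂ) (qc z * qc τ ^ l)
      rw [norm_one] at h2
      calc DD τ ε ≤ 1 - (1 + ε) * ‖qc τ‖ := min_le_left _ _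
        _ ≤ 1 - ‖qc z * qc τ ^ l‖ := by linarith
        _ ≤ ‖1 - qc z * qc τ ^ l‖ := by linarith
  rw [norm_div, norm_mul, norm_mul, hn1, one_mul]
  unfold vv
  apply div_le_div₀ (by positivity) ?_ hD hd
  apply mul_le_mul hn2 hn3 (by positivity) (by positivity)

lemma vv_summable {τ : ℂ} {ε : ℝ} (hr0 : 0 < ‖qc τ‖) (hq1 : ‖qc τ‖ < 1)
    (hε0 : 0 < ε) (hεr : ε ≤ (1 - ‖qc τ‖) / 2) : Summable (vv τ ε) := by
  have hD := DD_pos hr0 hq1 hε0 hεr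
  set w : ℕ → ℝ := fun k => (3/2) ^ k * ‖qc τ‖ ^ (k * (k - 1) / 2) / DD τ ε with hw
  have hwnn : ∀ k, 0 ≤ w k := by
    intro k
    simp only [hw]
    positivity
  have hrec : ∀ k, w (k + 1) = ((3/2) * ‖qc τ‖ ^ k) * w k := by
    intro k
    simp only [hw, Nat.add_sub_cancel, tri_succ k, pow_add, pow_succ]
    ring
  have hwsum : Summable w := by
    apply summable_of_ratio_norm_eventually_le (r := 1/2) (by norm_num)
    have hev : ∀ᶠ k in Filter.atTop, ‖qc τ‖ ^ k ≤ 1/3 :=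
      (tendsto_pow_atTop_nhds_zero_of_lt_one (norm_nonneg _) hq1).eventually
        (eventually_le_nhds (by norm_num))
    filter_upwards [hev] with k hk
    rw [Real.norm_of_nonneg (hwnn _), Real.norm_of_nonneg (hwnn _), hrec k]
    nlinarith [hwnn k, pow_nonneg (norm_nonneg (qc τ)) k]
  apply Summable.of_nat_of_neg
  · apply hwsum.congr
    intro n
    simp [hw, vv]
  · apply hwsum.congr
    intro n
    simp [hw, vv]

lemma f0_eq (τ z : ℂ) :
    (-1 : ℂ) ^ (0 : ℤ) * qc z ^ (0 : ℤ) * qc τ ^ ((0 : ℤ) * (0 + 1) / 2) /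
      (1 - qc z * qc τ ^ (0 : ℤ)) = 1 / (1 - qc z) := by
  norm_num

lemma f_summable {τ z : ℂ} {ε : ℝ} (hr0 : 0 < ‖qc τ‖) (hq1 : ‖qc τ‖ < 1)
    (hε0 : 0 < ε) (hε2 : ε ≤ 1/2) (hεr : ε ≤ (1 - ‖qc τ‖) / 2)
    (hy : ‖qc z - 1‖ ≤ ε) (hyi : ‖(qc z)⁻¹ - 1‖ ≤ ε) :
    Summable (fun l : ℤ =>
      (-1 : ℂ) ^ l * qc z ^ l * qc τ ^ (l * (l + 1) / 2) / (1 - qc z * qc τ ^ l)) := by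
  apply Summable.of_norm_bounded_eventually (vv_summable hr0 hq1 hε0 hεr)
  rw [Filter.eventually_cofinite]
  apply Set.Finite.subset (Set.finite_singleton (0 : ℤ))
  intro l hl
  simp only [Set.mem_setOf_eq, not_le] at hl
  by_contra h0
  simp only [Set.mem_singleton_iff] at h0
  exact absurd (term_bound hr0 hq1 hε0 hε2 hεr hy hyi h0) (not_le.2 hl)

lemma sum_split {τ z : ℂ} {ε : ℝ} (hr0 : 0 < ‖qc τ‖) (hq1 : ‖qc τ‖ < 1)
    (hε0 : 0 < ε) (hε2 : ε ≤ 1/2) (hεr : ε ≤ (1 - ‖qc τ‖) / 2)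
    (hy : ‖qc z - 1‖ ≤ ε) (hyi : ‖(qc z)⁻¹ - 1‖ ≤ ε) :
    (∑' l : ℤ, (-1 : ℂ) ^ l * qc z ^ l * qc τ ^ (l * (l + 1) / 2) / (1 - qc z * qc τ ^ l))
      = 1 / (1 - qc z) + RR τ z := by
  rw [Summable.tsum_eq_add_tsum_ite (f_summable hr0 hq1 hε0 hε2 hεr hy hyi) 0, f0_eq, RR]

lemma RR_bound {τ z : ℂ} {ε : ℝ} (hr0 : 0 < ‖qc τ‖) (hq1 : ‖qc τ‖ < 1)
    (hε0 : 0 < ε) (hε2 : ε ≤ 1/2) (hεr : ε ≤ (1 - ‖qc τ‖) / 2)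
    (hy : ‖qc z - 1‖ ≤ ε) (hyi : ‖(qc z)⁻¹ - 1‖ ≤ ε) :
    ‖RR τ z‖ ≤ ∑' l : ℤ, vv τ ε l := by
  apply tsum_of_norm_bounded (vv_summable hr0 hq1 hε0 hεr).hasSum
  intro l
  by_cases hl : l = 0
  · subst hl
    simp only [if_pos, norm_zero]
    exact vv_nonneg hr0 hq1 hε0 hεr 0
  · rw [if_neg hl]
    exact term_bound hr0 hq1 hε0 hε2 hεr hy hyi hl


/-! ### Algebra -/

lemma eta_cube (τ : ℂ) :
    _root_.eta τ ^ 3 = Complex.exp (Real.pi * Complex.I * τ / 4) * Pz τ ^ 3 := by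
  rw [_root_.eta, mul_pow, ← Complex.exp_nat_mul]
  have h : ((3:ℕ):ℂ) * ((Real.pi : ℂ) * Complex.I * τ / 12) =
      (Real.pi : ℂ) * Complex.I * τ / 4 := by push_cast; ring
  rw [h]
  rfl

lemma main_identity {τ z : ℂ} (hq1 : ‖qc τ‖ < 1) (hy : ‖qc z‖ ≤ 3/2)
    (hyi : ‖(qc z)⁻¹‖ ≤ 3/2)
    (h0B : ∀ n : ℕ, 1 - qc z * qc τ ^ (n + 1) ≠ 0)
    (h0C : ∀ n : ℕ, 1 - (qc z)⁻¹ * qc τ ^ n ≠ 0)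
    (h1y : 1 - qc z ≠ 0)
    (hsum : (∑' l : ℤ, (-1 : ℂ) ^ l * qc z ^ l * qc τ ^ (l * (l + 1) / 2) /
        (1 - qc z * qc τ ^ l)) = 1 / (1 - qc z) + RR τ z) :
    theta1 τ z ^ 2 * appellMu τ z / _root_.eta τ ^ 3
      = PB τ z * PC τ z / Pz τ ^ 2
        + -(qc z * (Pz τ * PB τ z * ((1 - (qc z)⁻¹) * PC τ z)) * RR τ z) / Pz τ ^ 3 := by
  have hθ := theta1_eq hq1 hy hyi h0B h0C
  have hPz := (Pz_props hq1).2
  have hPB := (PB_props hq1 hy h0B).2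
  have hPC := (PC_props hq1 hyi (fun n => h0C (n + 1))).2
  have hC0 : 1 - (qc z)⁻¹ ≠ 0 := by have := h0C 0; rwa [pow_zero, mul_one] at this
  have hqz : qc z ≠ 0 := qc_ne_zero z
  have hE4 : Complex.exp ((Real.pi : ℂ) * Complex.I * τ / 4) ≠ 0 := Complex.exp_ne_zero _
  have hEz : Complex.exp ((Real.pi : ℂ) * Complex.I * z) ≠ 0 := Complex.exp_ne_zero _
  have hθne : theta1 τ z ≠ 0 := by
    rw [hθ]
    exact mul_ne_zero (mul_ne_zero (mul_ne_zero (neg_ne_zero.2 Complex.I_ne_zero) hE4) hEz)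
      (mul_ne_zero (mul_ne_zero hPz hPB) (mul_ne_zero hC0 hPC))
  have hEzsq : Complex.exp ((Real.pi : ℂ) * Complex.I * z) *
      Complex.exp ((Real.pi : ℂ) * Complex.I * z) = qc z := by
    rw [← Complex.exp_add, qc]
    congr 1
    ring
  have key : theta1 τ z ^ 2 * appellMu τ z
      = theta1 τ z * (-Complex.I * Complex.exp ((Real.pi : ℂ) * Complex.I * z)) *
        (1 / (1 - qc z) + RR τ z) := by
    rw [appellMu, hsum]
    field_simp [hθne]
  rw [key, hθ, eta_cube]
  have step : -Complex.I * Complex.exp ((Real.pi : ℂ) * Complex.I * τ / 4) *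
        Complex.exp ((Real.pi : ℂ) * Complex.I * z) *
        (Pz τ * PB τ z * ((1 - (qc z)⁻¹) * PC τ z)) *
        (-Complex.I * Complex.exp ((Real.pi : ℂ) * Complex.I * z))
      = -(Complex.exp ((Real.pi : ℂ) * Complex.I * τ / 4) * qc z *
          (Pz τ * PB τ z * ((1 - (qc z)⁻¹) * PC τ z))) := by
    calc -Complex.I * Complex.exp ((Real.pi : ℂ) * Complex.I * τ / 4) *
        Complex.exp ((Real.pi : ℂ) * Complex.I * z) *
        (Pz τ * PB τ z * ((1 - (qc z)⁻¹) * PC τ z)) *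
        (-Complex.I * Complex.exp ((Real.pi : ℂ) * Complex.I * z))
        = (Complex.I * Complex.I) * (Complex.exp ((Real.pi : ℂ) * Complex.I * τ / 4) *
          (Complex.exp ((Real.pi : ℂ) * Complex.I * z) *
            Complex.exp ((Real.pi : ℂ) * Complex.I * z)) *
          (Pz τ * PB τ z * ((1 - (qc z)⁻¹) * PC τ z))) := by ring
      _ = -(Complex.exp ((Real.pi : ℂ) * Complex.I * τ / 4) * qc z *
          (Pz τ * PB τ z * ((1 - (qc z)⁻¹) * PC τ z))) := by
          rw [Complex.I_mul_I, hEzsq]; ring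
  rw [step]
  have hYinv : qc z * (1 - (qc z)⁻¹) = -(1 - qc z) := by
    field_simp
    ring
  field_simp
  ring_nf

end AuxLemmas

/-- the massless N=4 character `ch_{1/4,0}(τ,z) = θ₁(τ,z)²μ(τ,z)/η(τ)³` has
Witten index 1: as `z → 0` through points not in `ℤτ + ℤ`, `θ₁(τ,z)²·μ(τ,z)/η(τ)³ → 1`. -/
theorem stmt_16 (τ : ℂ) (hτ : 0 < τ.im) :
    Filter.Tendsto (fun z : ℂ => theta1 τ z ^ 2 * appellMu τ z / eta τ ^ 3)
      (nhdsWithin 0 {z : ℂ | ∀ m n : ℤ, z ≠ m * τ + n}) (nhds 1) := by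
  have hq0 : qc τ ≠ 0 := qc_ne_zero τ
  have hr0 : 0 < ‖qc τ‖ := norm_pos_iff.2 hq0
  have hq1 : ‖qc τ‖ < 1 := by
    rw [qc_norm]
    have : Real.exp (-(2 * Real.pi * τ.im)) < Real.exp 0 :=
      Real.exp_lt_exp.2 (by nlinarith [Real.pi_pos])
    simpa using this
  set ε : ℝ := min (1/2) ((1 - ‖qc τ‖)/2) with hεdef
  have hε0 : 0 < ε := lt_min (by norm_num) (by linarith)
  have hε2 : ε ≤ 1/2 := min_le_left _ _
  have hεr : ε ≤ (1 - ‖qc τ‖)/2 := min_le_right _ _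
  have hqcc : Continuous qc := by
    have : (fun w : ℂ => qc w) = fun w => Complex.exp (2 * Real.pi * Complex.I * w) := rfl
    rw [show qc = fun w => Complex.exp (2 * Real.pi * Complex.I * w) from rfl]
    exact Complex.continuous_exp.comp (continuous_const.mul continuous_id)
  obtain ⟨δ, hδ0, hδ⟩ : ∃ δ > 0, ∀ w : ℂ, dist w 0 < δ → ‖qc w - 1‖ ≤ ε := by
    obtain ⟨δ, hδ0, h⟩ := Metric.continuousAt_iff.1 hqcc.continuousAt ε hε0
    refine ⟨δ, hδ0, fun w hw => ?_⟩
    have := h hw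
    rw [dist_eq_norm, qc_zero] at this
    exact this.le
  set s : Set ℂ := {z : ℂ | dist z 0 < δ ∧ (z = 0 ∨ ∀ m n : ℤ, z ≠ m * τ + n)} with hsdef
  have h0s : (0:ℂ) ∈ s := ⟨by simpa using hδ0, Or.inl rfl⟩
  have hyε : ∀ z ∈ s, ‖qc z - 1‖ ≤ ε := fun z hz => hδ z hz.1
  have hyiε : ∀ z ∈ s, ‖(qc z)⁻¹ - 1‖ ≤ ε := by
    intro z hz
    rw [qc_inv]
    apply hδ
    have := hz.1
    rw [dist_eq_norm] at this ⊢
    simpa using this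
  have hy32 : ∀ z ∈ s, ‖qc z‖ ≤ 3/2 := by
    intro z hz
    have h := norm_sub_norm_le (qc z) 1
    rw [norm_one] at h
    have := hyε z hz
    linarith
  have hyi32 : ∀ z ∈ s, ‖(qc z)⁻¹‖ ≤ 3/2 := by
    intro z hz
    have h := norm_sub_norm_le ((qc z)⁻¹) 1
    rw [norm_one] at h
    have := hyiε z hz
    linarith
  have h0B : ∀ z ∈ s, ∀ n : ℕ, 1 - qc z * qc τ ^ (n + 1) ≠ 0 := by
    intro z hz n
    rcases hz.2 with rfl | hlat
    · rw [qc_zero, one_mul]; exact one_sub_pow_ne hq1 n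
    · have := one_sub_qc_mul_ne hlat ((n + 1 : ℕ) : ℤ)
      rwa [zpow_natCast] at this
  have h0C : ∀ z ∈ s, ∀ n : ℕ, 1 - (qc z)⁻¹ * qc τ ^ (n + 1) ≠ 0 := by
    intro z hz n
    rw [qc_inv]
    rcases hz.2 with rfl | hlat
    · rw [neg_zero, qc_zero, one_mul]; exact one_sub_pow_ne hq1 n
    · have := one_sub_qc_mul_ne (neg_lattice hlat) ((n + 1 : ℕ) : ℤ)
      rwa [zpow_natCast] at this
  have h0Cfull : ∀ z : ℂ, (∀ m n : ℤ, z ≠ m * τ + n) → ∀ n : ℕ,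
      1 - (qc z)⁻¹ * qc τ ^ n ≠ 0 := by
    intro z hlat n
    rw [qc_inv]
    have := one_sub_qc_mul_ne (neg_lattice hlat) (n : ℤ)
    rwa [zpow_natCast] at this
  set L := nhdsWithin (0:ℂ) {z : ℂ | ∀ m n : ℤ, z ≠ m * τ + n} with hLdef
  have hLs : L ≤ nhdsWithin 0 s := by
    rw [hLdef, nhdsWithin_restrict' _ (Metric.ball_mem_nhds (0:ℂ) hδ0)]
    apply nhdsWithin_mono
    intro z hz
    exact ⟨by simpa [Metric.mem_ball] using hz.2, Or.inr hz.1⟩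
  have hev : ∀ᶠ z in L, z ∈ s ∧ (∀ m n : ℤ, z ≠ m * τ + n) := by
    have h1 : ∀ᶠ z in L, z ∈ {z : ℂ | ∀ m n : ℤ, z ≠ m * τ + n} :=
      eventually_mem_nhdsWithin
    have h2 : ∀ᶠ z in L, z ∈ s := eventually_mem_nhdsWithin.filter_mono hLs
    filter_upwards [h1, h2] with z hz1 hz2
    exact ⟨hz2, hz1⟩
  have hqinvc : Continuous (fun z : ℂ => (qc z)⁻¹) := by
    have : (fun z : ℂ => (qc z)⁻¹) = fun z => qc (-z) := funext qc_inv
    rw [this]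
    exact hqcc.comp continuous_neg
  have hPBcont : ContinuousOn (fun z => PB τ z) s := by
    apply continuousOn_tprod' (M := 2) (by norm_num) (norm_nonneg _) hq1
    · intro n
      exact (continuous_const.sub (hqcc.mul continuous_const)).continuousOn
    · intro n z hz; exact h0B z hz n
    · intro n z hz
      rw [sub_sub_cancel_left, norm_neg, norm_mul, norm_pow]
      exact pow_bound_aux _ (norm_nonneg _) (hy32 z hz) (norm_nonneg _) hq1 n
  have hPCcont : ContinuousOn (fun z => PC τ z) s := by
    apply continuousOn_tprod' (M := 2) (by norm_num) (norm_nonneg _) hq1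
    · intro n
      exact (continuous_const.sub (hqinvc.mul continuous_const)).continuousOn
    · intro n z hz; exact h0C z hz n
    · intro n z hz
      rw [sub_sub_cancel_left, norm_neg, norm_mul, norm_pow]
      exact pow_bound_aux _ (norm_nonneg _) (hyi32 z hz) (norm_nonneg _) hq1 n
  have hPB0 : PB τ 0 = Pz τ := by
    apply tprod_congr
    intro n
    rw [qc_zero, one_mul]
  have hPC0 : PC τ 0 = Pz τ := by
    apply tprod_congr
    intro n
    rw [qc_zero, inv_one, one_mul]
  have hPzne := (Pz_props hq1).2
  have hPBt : Filter.Tendsto (fun z => PB τ z) L (nhds (Pz τ)) := by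
    have h := hPBcont 0 h0s
    rw [ContinuousWithinAt, hPB0] at h
    exact h.mono_left hLs
  have hPCt : Filter.Tendsto (fun z => PC τ z) L (nhds (Pz τ)) := by
    have h := hPCcont 0 h0s
    rw [ContinuousWithinAt, hPC0] at h
    exact h.mono_left hLs
  have hyinvT : Filter.Tendsto (fun z : ℂ => 1 - (qc z)⁻¹) L (nhds 0) := by
    have hco : Continuous (fun z : ℂ => 1 - (qc z)⁻¹) := continuous_const.sub hqinvc
    have h := hco.tendsto 0
    rw [qc_zero, inv_one, sub_self] at h
    exact h.mono_left (hLs.trans nhdsWithin_le_nhds)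
  have hTt : Filter.Tendsto (fun z => Pz τ * PB τ z * ((1 - (qc z)⁻¹) * PC τ z)) L (nhds 0) := by
    have h := (tendsto_const_nhds (x := Pz τ) (f := L)).mul hPBt |>.mul (hyinvT.mul hPCt)
    simpa using h
  have hMt : Filter.Tendsto (fun z => PB τ z * PC τ z / Pz τ ^ 2) L (nhds 1) := by
    have h := (hPBt.mul hPCt).div_const (Pz τ ^ 2)
    have hval : Pz τ * Pz τ / Pz τ ^ 2 = 1 := by
      rw [← sq]
      exact div_self (pow_ne_zero 2 hPzne)
    rwa [hval] at h
  set B : ℝ := ∑' l : ℤ, vv τ ε l with hBdef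
  have hNt : Filter.Tendsto
      (fun z => -(qc z * (Pz τ * PB τ z * ((1 - (qc z)⁻¹) * PC τ z)) * RR τ z) / Pz τ ^ 3)
      L (nhds 0) := by
    apply squeeze_zero_norm'
      (a := fun z => 3/2 * ‖Pz τ * PB τ z * ((1 - (qc z)⁻¹) * PC τ z)‖ * B / ‖Pz τ ^ 3‖)
    · filter_upwards [hev] with z hz
      have hR := RR_bound hr0 hq1 hε0 hε2 hεr (hyε z hz.1) (hyiε z hz.1)
      rw [norm_div, norm_neg, norm_mul, norm_mul]
      have h1 : ‖qc z‖ * ‖Pz τ * PB τ z * ((1 - (qc z)⁻¹) * PC τ z)‖ * ‖RR τ z‖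
          ≤ 3/2 * ‖Pz τ * PB τ z * ((1 - (qc z)⁻¹) * PC τ z)‖ * B := by
        apply mul_le_mul (mul_le_mul (hy32 z hz.1) le_rfl (norm_nonneg _) (by norm_num))
          hR (norm_nonneg _)
        positivity
      exact div_le_div_of_nonneg_right h1 (norm_nonneg _)
    · have h := ((tendsto_const_nhds (x := (3/2 : ℝ)) (f := L)).mul hTt.norm).mul
        (tendsto_const_nhds (x := B)) |>.div_const (‖Pz τ ^ 3‖)
      simpa using h
  have hGt : Filter.Tendsto
      (fun z => PB τ z * PC τ z / Pz τ ^ 2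
        + -(qc z * (Pz τ * PB τ z * ((1 - (qc z)⁻¹) * PC τ z)) * RR τ z) / Pz τ ^ 3)
      L (nhds 1) := by
    have h := hMt.add hNt
    rwa [add_zero] at h
  apply Filter.Tendsto.congr' ?_ hGt
  filter_upwards [hev] with z hz
  have h1y : 1 - qc z ≠ 0 := by
    have := one_sub_qc_mul_ne hz.2 0
    rwa [zpow_zero, mul_one] at this
  have hsum := sum_split hr0 hq1 hε0 hε2 hεr (hyε z hz.1) (hyiε z hz.1)
  exact (main_identity hq1 (hy32 z hz.1) (hyi32 z hz.1) (h0B z hz.1) (h0Cfull z hz.2)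
    h1y hsum).symm
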